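/- The growth and pruning operators satisfy the commutation relation P G - G P = n·I on ℂ𝒯_n for every n ≥ 1: for every rooted unlabeled tree t on n vertices, P(G(t)) - G(P(t)) = n·t. -/

import Mathlib

/-!
Common definitions: rooted unlabeled trees on `n` vertices, the growth/pruning
coefficients `n(t,t')` and `m(t,t')`, the measure `π_n`, the up/down transition
probabilities, the down-up and up-down Markov chains, and separation distance.

A rooted tree is represented as `PreTree.node cs` where `cs` is the list of
subtrees of the root's children.  An *unlabeled* rooted tree is represented by
its canonical representative (children recursively sorted by an injective
encoding into `ℕ`), and `trees n` is the finite set of canonical rooted trees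
on `n` vertices.
-/

namespace RootedTreeChain

inductive PreTree : Type where
  | node : List PreTree → PreTree

namespace PreTree

/- Number of vertices. -/
mutual
  def size : PreTree → ℕ
    | .node cs => 1 + sizeList cs
  def sizeList : List PreTree → ℕ
    | [] => 0
    | t :: ts => size t + sizeList ts
end

mutual
def deq : (a b : PreTree) → Decidable (a = b)
  | .node cs, .node ds =>
    match deqList cs ds with
    | isTrue h => isTrue (by rw [h])
    | isFalse h => isFalse (by intro hh; cases hh; exact h rfl)
def deqList : (as bs : List PreTree) → Decidable (as = bs)
  | [], [] => isTrue rfl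
  | [], _ :: _ => isFalse (by simp)
  | _ :: _, [] => isFalse (by simp)
  | a :: as, b :: bs =>
    match deq a b, deqList as bs with
    | isTrue h1, isTrue h2 => isTrue (by rw [h1, h2])
    | isFalse h1, _ => isFalse (by intro hh; injection hh; contradiction)
    | _, isFalse h2 => isFalse (by intro hh; injection hh; contradiction)
end

instance : DecidableEq PreTree := deq

/- An injective encoding of trees into `ℕ`, used only to sort children
so that each unlabeled rooted tree has a unique canonical representative. -/
mutual
  def enc : PreTree → ℕ
    | .node cs => encList cs
  def encList : List PreTree → ℕ
    | [] => 0
    | t :: ts => Nat.pair (enc t) (encList ts) + 1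
end

/- Canonical representative of the isomorphism class of a rooted tree:
recursively sort the children by their encoding. -/
mutual
  def canon : PreTree → PreTree
    | .node cs => .node ((canonList cs).mergeSort (fun a b => enc a ≤ enc b))
  def canonList : List PreTree → List PreTree
    | [] => []
    | t :: ts => canon t :: canonList ts
end

/-- The one-vertex rooted tree `•`. -/
def leaf : PreTree := .node []

/- The addresses (paths of child indices from the root) of all vertices. -/
mutual
  def positions : PreTree → List (List ℕ)
    | .node cs => [] :: positionsList 0 cs
  def positionsList : ℕ → List PreTree → List (List ℕ)
    | _, [] => []
    | i, t :: ts => (positions t).map (fun p => i :: p) ++ positionsList (i + 1) ts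
end

/- The addresses of all terminal vertices (vertices with no outgoing edge). -/
mutual
  def termPositions : PreTree → List (List ℕ)
    | .node [] => [[]]
    | .node (c :: cs) => termPositionsList 0 (c :: cs)
  def termPositionsList : ℕ → List PreTree → List (List ℕ)
    | _, [] => []
    | i, t :: ts => (termPositions t).map (fun p => i :: p) ++ termPositionsList (i + 1) ts
end

/- Attach a new terminal vertex by an edge to the vertex at address `p`. -/
mutual
  def addLeafAt : PreTree → List ℕ → PreTree
    | .node cs, [] => .node (cs ++ [leaf])
    | .node cs, i :: p => .node (addLeafAtList cs i p)
  def addLeafAtList : List PreTree → ℕ → List ℕ → List PreTree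
    | [], _, _ => []
    | t :: ts, 0, p => addLeafAt t p :: ts
    | t :: ts, i + 1, p => t :: addLeafAtList ts i p
end

/- Remove the (terminal) vertex at address `p` together with the edge into it. -/
mutual
  def removeAt : PreTree → List ℕ → PreTree
    | .node cs, [] => .node cs
    | .node cs, [i] => .node (cs.eraseIdx i)
    | .node cs, i :: p => .node (removeAtList cs i p)
  def removeAtList : List PreTree → ℕ → List ℕ → List PreTree
    | [], _, _ => []
    | t :: ts, 0, p => removeAt t p :: ts
    | t :: ts, i + 1, p => t :: removeAtList ts i p
end

/-- For `s ↗ t` (and more generally any `s, t` with `size t = size s + 1`),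
`ncoef s t` is `n(s,t)`: the number of vertices of `s` to which a new edge can
be added to obtain `t`. -/
def ncoef (s t : PreTree) : ℕ :=
  ((positions s).filter (fun p => canon (addLeafAt s p) = t)).length

/-- For `s ↗ t`, `mcoef s t` is `m(s,t)`: the number of edges of `t` (into a
terminal vertex) which when removed give `s`. -/
def mcoef (s t : PreTree) : ℕ :=
  ((termPositions t).filter (fun p => canon (removeAt t p) = s)).length

/-- The list of all (canonical representatives of) rooted unlabeled trees on
`n` vertices: every tree on `n+1 ≥ 2` vertices is obtained by attaching a new
terminal vertex to a tree on `n` vertices. -/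
def treeList : ℕ → List PreTree
  | 0 => []
  | 1 => [leaf]
  | n + 2 =>
      ((treeList (n + 1)).flatMap
        (fun t => (positions t).map (fun p => canon (addLeafAt t p)))).dedup

/-- The set `𝒯_n` of rooted unlabeled trees on `n` vertices. -/
def trees (n : ℕ) : Finset PreTree := (treeList n).toFinset

/-- `T_n = |𝒯_n|`, the number of rooted unlabeled trees on `n` vertices. -/
def T (n : ℕ) : ℕ := (trees n).card

/-- Generalized growth coefficients: `nGen k t t'` is the coefficient `n(t,t')`
of `t'` in `G^k(t)` (for `size t' = size t + k`). -/
def nGen : ℕ → PreTree → PreTree → ℕ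
  | 0, t, t' => if t = t' then 1 else 0
  | k + 1, t, t' => ((treeList (t.size + k)).map (fun s => nGen k t s * ncoef s t')).sum

/-- Generalized pruning coefficients: `mGen k t t'` is the coefficient `m(t,t')`
of `t` in `P^k(t')` (for `size t' = size t + k`). -/
def mGen : ℕ → PreTree → PreTree → ℕ
  | 0, t, t' => if t = t' then 1 else 0
  | k + 1, t, t' => ((treeList (t'.size - 1)).map (fun s => mcoef s t' * mGen k t s)).sum

/-- `m(t) = m(•,t)`, the number of ways to take `t` apart by sequentially
removing terminal edges. -/
def mWt (t : PreTree) : ℕ := mGen (t.size - 1) leaf t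

/-- `n(t) = n(•,t)`, the number of ways to build `t` up from `•`. -/
def nWt (t : PreTree) : ℕ := nGen (t.size - 1) leaf t

/-- The measure `π_n(t) = m(t) n(t) / ∏_{i=2}^n C(i,2)` on `𝒯_n`. -/
def piM (n : ℕ) (t : PreTree) : ℚ :=
  (mWt t * nWt t : ℚ) / ∏ i ∈ Finset.Icc 2 n, (Nat.choose i 2 : ℚ)

/-- Upward transition probability `P_u(s,t) = m(s,t) n(t) / (C(n,2) n(s))`
from `s ∈ 𝒯_{n-1}` to `t ∈ 𝒯_n`. -/
def Pu (n : ℕ) (s t : PreTree) : ℚ :=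
  (mcoef s t : ℚ) * (nWt t : ℚ) / ((Nat.choose n 2 : ℚ) * (nWt s : ℚ))

/-- Downward transition probability `P_d(t,s) = m(s,t) m(s) / m(t)`
from `t ∈ 𝒯_n` to `s ∈ 𝒯_{n-1}`. -/
def Pd (t s : PreTree) : ℚ :=
  (mcoef s t : ℚ) * (mWt s : ℚ) / (mWt t : ℚ)

/-- The down-up Markov chain on `𝒯_n`:
`K(t,t') = Σ_{s : s ↗ t, s ↗ t'} P_d(t,s) P_u(s,t')`.  (The sum may be taken
over all `s ∈ 𝒯_{n-1}` since the summand vanishes unless `s ↗ t` and `s ↗ t'`.) -/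
def K (n : ℕ) (t t' : PreTree) : ℚ :=
  ∑ s ∈ trees (n - 1), Pd t s * Pu n s t'

/-- `r`-step transition probabilities `K^r(t,t')` of the down-up chain. -/
def Kpow (n : ℕ) : ℕ → PreTree → PreTree → ℚ
  | 0, t, t' => if t = t' then 1 else 0
  | r + 1, t, t' => ∑ s ∈ trees n, K n t s * Kpow n r s t'

/-- The up-down Markov chain on `𝒯_n`:
`DU_n(t,t') = Σ_{s : s ⋗ t, s ⋗ t'} P_u(t,s) P_d(s,t')`. -/
def DU (n : ℕ) (t t' : PreTree) : ℚ :=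
  ∑ s ∈ trees (n + 1), Pu (n + 1) t s * Pd s t'

/-- `r`-step transition probabilities of the up-down chain. -/
def DUpow (n : ℕ) : ℕ → PreTree → PreTree → ℚ
  | 0, t, t' => if t = t' then 1 else 0
  | r + 1, t, t' => ∑ s ∈ trees n, DU n t s * DUpow n r s t'

/-- Maximal separation distance `s^*(r) = max_{t,t' ∈ 𝒯_n} [1 - K^r(t,t')/π_n(t')]`
of the down-up chain on `𝒯_n`. -/
noncomputable def sStar (n r : ℕ) : ℝ :=
  sSup {x : ℝ | ∃ t ∈ trees n, ∃ t' ∈ trees n,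
    x = 1 - (Kpow n r t t' : ℝ) / (piM n t' : ℝ)}

/-- Maximal separation distance of the up-down chain on `𝒯_n`. -/
noncomputable def sStarDU (n r : ℕ) : ℝ :=
  sSup {x : ℝ | ∃ t ∈ trees n, ∃ t' ∈ trees n,
    x = 1 - (DUpow n r t t' : ℝ) / (piM n t' : ℝ)}

/-- The path on `n` vertices (rooted at an end): the unique rooted tree on
`n ≥ 2` vertices with exactly one terminal vertex. -/
def pathTree : ℕ → PreTree
  | 0 => leaf
  | 1 => leaf
  | n + 2 => .node [pathTree (n + 1)]

/-- The star on `n` vertices (rooted at the center): the unique rooted tree on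
`n` vertices with `n-1` terminal vertices. -/
def starTree (n : ℕ) : PreTree := .node (List.replicate (n - 1) leaf)


/- The order of the symmetry group `SG(t) = ∏_{v ∈ t} SG(t,v)`, where for a
vertex `v` with children `v_1, …, v_k`, `SG(t,v)` is generated by the
permutations exchanging isomorphic subtrees rooted at the `v_i`. -/
mutual
  def sgOrder : PreTree → ℕ
    | .node cs => sgOrderList cs *
        ((canonList cs).dedup.map (fun c => Nat.factorial ((canonList cs).count c))).prod
  def sgOrderList : List PreTree → ℕ
    | [] => 1
    | t :: ts => sgOrder t * sgOrderList ts
end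

/- `hProd t = ∏_{v ∈ t} h(v)`, the product over all vertices `v` of `t` of the
number `h(v)` of vertices of the subtree rooted at `v`. -/
mutual
  def hProd : PreTree → ℕ
    | .node cs => size (.node cs) * hProdList cs
  def hProdList : List PreTree → ℕ
    | [] => 1
    | t :: ts => hProd t * hProdList ts
end

/-- The matrix entry of `G P : ℂ𝒯_n → ℂ𝒯_n`: the coefficient of `t'` in `G(P(t))`. -/
def gpEntry (n : ℕ) (t t' : PreTree) : ℕ :=
  ∑ s ∈ trees (n - 1), mcoef s t * ncoef s t'

/-- The matrix entry of `(G P)^l : ℂ𝒯_n → ℂ𝒯_n`: the coefficient of `t'` in `(GP)^l(t)`. -/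
def gpPow (n : ℕ) : ℕ → PreTree → PreTree → ℕ
  | 0, t, t' => if t = t' then 1 else 0
  | l + 1, t, t' => ∑ u ∈ trees n, gpPow n l t u * gpEntry n u t'

end PreTree


namespace PreTree

/-! ### Basic size lemmas -/

lemma size_node (cs : List PreTree) : size (.node cs) = 1 + sizeList cs := rfl
lemma sizeList_cons (t : PreTree) (ts : List PreTree) :
    sizeList (t :: ts) = size t + sizeList ts := rfl
lemma sizeList_nil : sizeList [] = 0 := rfl

lemma sizeList_append (xs ys : List PreTree) :
    sizeList (xs ++ ys) = sizeList xs + sizeList ys := by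
  induction xs with
  | nil => simp [sizeList_nil]
  | cons a l ih => simp [sizeList_cons, ih]; omega

lemma size_pos (t : PreTree) : 1 ≤ size t := by
  cases t with
  | node cs => rw [size_node]; omega

lemma sizeList_eq_sum (ts : List PreTree) : sizeList ts = (ts.map size).sum := by
  induction ts with
  | nil => rfl
  | cons a l ih => simp [sizeList_cons, ih]

lemma size_le_of_mem {c : PreTree} {cs : List PreTree} (h : c ∈ cs) :
    size c ≤ sizeList cs := by
  induction cs with
  | nil => simp at h
  | cons a l ih =>
    rcases List.mem_cons.1 h with rfl | h
    · rw [sizeList_cons]; omega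
    · have := ih h; rw [sizeList_cons]; omega

lemma size_lt_of_mem {c : PreTree} {cs : List PreTree} (h : c ∈ cs) :
    size c < size (.node cs) := by
  have := size_le_of_mem h; rw [size_node]; omega

/-! ### `enc` is injective -/

lemma encList_nil : encList [] = 0 := rfl
lemma encList_cons (t : PreTree) (ts : List PreTree) :
    encList (t :: ts) = Nat.pair (enc t) (encList ts) + 1 := rfl
lemma enc_node (cs : List PreTree) : enc (.node cs) = encList cs := rfl

lemma enc_inj_aux : ∀ n : ℕ,
    (∀ t s : PreTree, size t ≤ n → enc t = enc s → t = s) ∧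
    (∀ ts ss : List PreTree, sizeList ts ≤ n → encList ts = encList ss → ts = ss) := by
  intro n
  induction n with
  | zero =>
    constructor
    · intro t s h; have := size_pos t; omega
    · intro ts ss h he
      cases ts with
      | cons a l => have := size_pos a; rw [sizeList_cons] at h; omega
      | nil =>
        cases ss with
        | nil => rfl
        | cons b l => rw [encList_nil, encList_cons] at he; omega
  | succ n ih =>
    have htree : ∀ t s : PreTree, size t ≤ n + 1 → enc t = enc s → t = s := by
      intro t s h he
      cases t with | node cs => cases s with | node ds =>
      rw [enc_node, enc_node] at he
      rw [size_node] at h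
      rw [ih.2 cs ds (by omega) he]
    refine ⟨htree, ?_⟩
    intro ts ss h he
    cases ts with
    | nil =>
      cases ss with
      | nil => rfl
      | cons b l => rw [encList_nil, encList_cons] at he; omega
    | cons a l =>
      cases ss with
      | nil => rw [encList_nil, encList_cons] at he; omega
      | cons b l' =>
        rw [encList_cons, encList_cons] at he
        have hp := Nat.pair_eq_pair.1 (by omega : Nat.pair (enc a) (encList l) = Nat.pair (enc b) (encList l'))
        rw [sizeList_cons] at h
        have h1 : size a ≤ n + 1 := by omega
        have h2 : sizeList l ≤ n := by have := size_pos a; omega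
        rw [htree a b h1 hp.1, ih.2 l l' h2 hp.2]

lemma enc_inj {t s : PreTree} (h : enc t = enc s) : t = s :=
  (enc_inj_aux (size t)).1 t s le_rfl h

/-! ### mergeSort facts -/

lemma mergeSort_perm_eq {l l' : List PreTree} (h : l.Perm l') :
    l.mergeSort (fun a b => enc a ≤ enc b) = l'.mergeSort (fun a b => enc a ≤ enc b) := by
  set le : PreTree → PreTree → Bool := fun a b => enc a ≤ enc b with hle
  have htrans : ∀ a b c : PreTree, le a b = true → le b c = true → le a c = true := by
    intro a b c h1 h2; simp only [hle, decide_eq_true_eq] at *; omega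
  have htotal : ∀ a b : PreTree, (le a b || le b a) = true := by
    intro a b; simp only [hle, Bool.or_eq_true, decide_eq_true_eq]; omega
  haveI : IsAntisymm PreTree (fun a b => le a b = true) := by
    constructor
    intro a b h1 h2
    simp only [hle, decide_eq_true_eq] at h1 h2
    exact enc_inj (by omega)
  refine List.Perm.eq_of_pairwise' (r := fun a b => le a b = true) (List.pairwise_mergeSort htrans htotal l)
    (List.pairwise_mergeSort htrans htotal l') ?_
  exact ((l.mergeSort_perm le).trans h).trans (l'.mergeSort_perm le).symm

lemma mergeSort_sorted_self (l : List PreTree) :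
    (l.mergeSort (fun a b => enc a ≤ enc b)).mergeSort (fun a b => enc a ≤ enc b)
      = l.mergeSort (fun a b => enc a ≤ enc b) := by
  apply List.mergeSort_of_pairwise
  apply List.pairwise_mergeSort
  · intro a b c h1 h2; simp only [decide_eq_true_eq] at *; omega
  · intro a b; simp only [Bool.or_eq_true, decide_eq_true_eq]; omega

/-! ### canon basics -/

lemma canonList_eq_map (cs : List PreTree) : canonList cs = cs.map canon := by
  induction cs with
  | nil => rfl
  | cons a l ih => rw [canonList, ih]; rfl

lemma canon_node (cs : List PreTree) :
    canon (.node cs) = .node ((cs.map canon).mergeSort (fun a b => enc a ≤ enc b)) := by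
  rw [canon, canonList_eq_map]

lemma canon_leaf : canon leaf = leaf := by
  rw [leaf, canon_node]; simp

lemma canon_idem_aux : ∀ n, ∀ t : PreTree, size t ≤ n → canon (canon t) = canon t := by
  intro n
  induction n with
  | zero => intro t h; have := size_pos t; omega
  | succ n ih =>
    intro t h
    cases t with | node cs =>
    rw [canon_node]
    set ds := (cs.map canon).mergeSort (fun a b => enc a ≤ enc b) with hds
    have hmem : ∀ d ∈ ds, canon d = d := by
      intro d hd
      have : d ∈ cs.map canon := ((cs.map canon).mergeSort_perm _).mem_iff.1 hd
      rcases List.mem_map.1 this with ⟨c, hc, rfl⟩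
      have hlt : size c ≤ n := by
        have h2 := size_lt_of_mem hc; rw [size_node] at h2 h; omega
      exact ih c hlt
    rw [canon_node]
    rw [List.map_congr_left (g := id) hmem, List.map_id]
    rw [hds, mergeSort_sorted_self]

lemma canon_idem (t : PreTree) : canon (canon t) = canon t :=
  canon_idem_aux (size t) t le_rfl

lemma size_canon_aux : ∀ n, ∀ t : PreTree, size t ≤ n → size (canon t) = size t := by
  intro n
  induction n with
  | zero => intro t h; have := size_pos t; omega
  | succ n ih =>
    intro t h
    cases t with | node cs =>
    rw [canon_node, size_node, size_node, sizeList_eq_sum, sizeList_eq_sum]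
    congr 1
    have hperm : ((cs.map canon).mergeSort (fun a b => enc a ≤ enc b)).map size
        |>.Perm ((cs.map canon).map size) :=
      ((cs.map canon).mergeSort_perm _).map size
    rw [hperm.sum_eq, List.map_map]
    congr 1
    apply List.map_congr_left
    intro c hc
    have hlt : size c ≤ n := by
      have h2 := size_lt_of_mem hc; rw [size_node] at h2 h; omega
    exact ih c hlt

lemma size_canon (t : PreTree) : size (canon t) = size t :=
  size_canon_aux (size t) t le_rfl

end PreTree
namespace PreTree

/-! ### Multiset utilities -/

lemma ms_erase_cons_of_mem {α : Type*} [DecidableEq α] {c : α} {s : Multiset α} (a : α)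
    (h : c ∈ s) : (a ::ₘ s).erase c = a ::ₘ s.erase c := by
  by_cases hca : c = a
  · subst hca; rw [Multiset.erase_cons_head, Multiset.cons_erase h]
  · rw [Multiset.erase_cons_tail _ (Ne.symm hca)]

lemma ms_erase_add_cons {α : Type*} [DecidableEq α] (s t : Multiset α) (a : α) :
    (s + a ::ₘ t).erase a = s + t := by
  have : s + a ::ₘ t = a ::ₘ (s + t) := by
    rw [Multiset.add_cons]  -- may not exist; fallback below
  rw [this, Multiset.erase_cons_head]

lemma ms_bind_if {α β : Type*} (P : Prop) [Decidable P] (s : Multiset α) (f : α → Multiset β) :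
    (s.bind fun x => if P then f x else 0) = if P then s.bind f else 0 := by
  split <;> simp

lemma ms_if_add {α : Type*} (P : Prop) [Decidable P] (u v : Multiset α) :
    (if P then u + v else 0) = (if P then u else 0) + (if P then v else 0) := by
  split <;> simp

lemma ms_bind_map_comm {α β γ : Type*} (s : Multiset α) (t : Multiset β) (f : α → β → γ) :
    (s.bind fun a => t.map (f a)) = t.bind fun b => s.map (fun a => f a b) := by
  rw [show (fun a => t.map (f a)) = fun a => t.bind (fun b => {f a b}) by
        funext a; rw [Multiset.bind_singleton]]
  rw [Multiset.bind_bind]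
  congr 1; funext b; rw [Multiset.bind_singleton]

lemma ms_bind_nsmul {α β : Type*} (s : Multiset α) (k : α → ℕ) (u : Multiset β) :
    (s.bind fun c => k c • u) = ((s.map k).sum) • u := by
  induction s using Multiset.induction with
  | empty => simp
  | cons a t ih => simp [Multiset.cons_bind, ih, add_smul]

lemma ps_swap {α β : Type*} [DecidableEq α] (m : Multiset α) (F : α → α → Multiset β) :
    (m.bind fun c => (m.erase c).bind (F c)) = m.bind fun c => (m.erase c).bind (fun d => F d c) := by
  induction m using Multiset.induction with
  | empty => simp
  | cons a s ih =>
    simp only [Multiset.cons_bind, Multiset.erase_cons_head]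
    have h1 : (s.bind fun c => ((a ::ₘ s).erase c).bind (F c))
        = (s.bind fun c => F c a + (s.erase c).bind (F c)) := by
      apply Multiset.bind_congr
      intro c hc
      rw [ms_erase_cons_of_mem a hc, Multiset.cons_bind]
    have h2 : (s.bind fun c => ((a ::ₘ s).erase c).bind (fun d => F d c))
        = (s.bind fun c => F a c + (s.erase c).bind (fun d => F d c)) := by
      apply Multiset.bind_congr
      intro c hc
      rw [ms_erase_cons_of_mem a hc, Multiset.cons_bind]
    rw [h1, h2, Multiset.bind_add, Multiset.bind_add, ih]
    abel

lemma ms_coe_eraseIdx : ∀ (l : List PreTree) (j : ℕ), (h : j < l.length) →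
    (↑(l.eraseIdx j) : Multiset PreTree) = (↑l : Multiset PreTree).erase l[j] := by
  intro l
  induction l with
  | nil => intro j h; simp at h
  | cons a t ih =>
    intro j h
    cases j with
    | zero => simp
    | succ j =>
      have hj : j < t.length := by simpa using h
      show ((a :: t.eraseIdx j : List PreTree) : Multiset PreTree) = _
      rw [← Multiset.cons_coe, ← Multiset.cons_coe, ih j hj,
        ms_erase_cons_of_mem a (by exact Multiset.mem_coe.2 (t.getElem_mem hj))]
      rfl

/-! ### list operation append lemmas -/

lemma addLeafAtList_append : ∀ (A : List PreTree) (c : PreTree) (B : List PreTree) (p : List ℕ),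
    addLeafAtList (A ++ c :: B) A.length p = A ++ addLeafAt c p :: B := by
  intro A
  induction A with
  | nil => intro c B p; rfl
  | cons a A ih => intro c B p; simp only [List.cons_append, List.length_cons, addLeafAtList, List.append_eq, ih]

lemma removeAtList_append : ∀ (A : List PreTree) (c : PreTree) (B : List PreTree) (p : List ℕ),
    removeAtList (A ++ c :: B) A.length p = A ++ removeAt c p :: B := by
  intro A
  induction A with
  | nil => intro c B p; rfl
  | cons a A ih => intro c B p; simp only [List.cons_append, List.length_cons, removeAtList, List.append_eq, ih]

lemma eraseIdx_append : ∀ (A : List PreTree) (c : PreTree) (B : List PreTree),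
    (A ++ c :: B).eraseIdx A.length = A ++ B := by
  intro A
  induction A with
  | nil => intro c B; rfl
  | cons a A ih => intro c B; simp only [List.cons_append, List.length_cons, List.eraseIdx, List.append_eq, ih]

/-! ### positions / termPositions decomposition -/

lemma posList_decomp : ∀ (cs : List PreTree) (i : ℕ) (q : List ℕ),
    q ∈ positionsList i cs →
    ∃ A c B p, cs = A ++ c :: B ∧ q = (i + A.length) :: p ∧ p ∈ positions c := by
  intro cs
  induction cs with
  | nil => intro i q h; simp [positionsList] at h
  | cons a ts ih =>
    intro i q h
    rw [positionsList] at h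
    rcases List.mem_append.1 h with h | h
    · rcases List.mem_map.1 h with ⟨p, hp, rfl⟩
      exact ⟨[], a, ts, p, rfl, by simp, hp⟩
    · rcases ih (i + 1) q h with ⟨A, c, B, p, rfl, hq, hp⟩
      exact ⟨a :: A, c, B, p, rfl, by simp [hq]; omega, hp⟩

lemma posList_intro : ∀ (A : List PreTree) (i : ℕ) (c : PreTree) (B : List PreTree) (p : List ℕ),
    p ∈ positions c → (i + A.length) :: p ∈ positionsList i (A ++ c :: B) := by
  intro A
  induction A with
  | nil =>
    intro i c B p hp
    rw [List.nil_append, positionsList]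
    exact List.mem_append.2 (Or.inl (List.mem_map.2 ⟨p, hp, by simp⟩))
  | cons a A ih =>
    intro i c B p hp
    rw [List.cons_append, positionsList]
    refine List.mem_append.2 (Or.inr ?_)
    have := ih (i + 1) c B p hp
    have harith : i + 1 + A.length = i + (a :: A).length := by simp; omega
    rwa [harith] at this

lemma termPosList_decomp : ∀ (cs : List PreTree) (i : ℕ) (q : List ℕ),
    q ∈ termPositionsList i cs →
    ∃ A c B p, cs = A ++ c :: B ∧ q = (i + A.length) :: p ∧ p ∈ termPositions c := by
  intro cs
  induction cs with
  | nil => intro i q h; simp [termPositionsList] at h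
  | cons a ts ih =>
    intro i q h
    rw [termPositionsList] at h
    rcases List.mem_append.1 h with h | h
    · rcases List.mem_map.1 h with ⟨p, hp, rfl⟩
      exact ⟨[], a, ts, p, rfl, by simp, hp⟩
    · rcases ih (i + 1) q h with ⟨A, c, B, p, rfl, hq, hp⟩
      exact ⟨a :: A, c, B, p, rfl, by simp [hq]; omega, hp⟩

lemma positions_node (cs : List PreTree) :
    positions (.node cs) = [] :: positionsList 0 cs := rfl

lemma termPositions_leaf : termPositions leaf = [[]] := rfl

lemma termPositions_node_cons (c : PreTree) (cs : List PreTree) :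
    termPositions (.node (c :: cs)) = termPositionsList 0 (c :: cs) := rfl

lemma termPos_nil_iff : ∀ (t : PreTree), [] ∈ termPositions t ↔ t = leaf := by
  intro t
  cases t with
  | node cs =>
    cases cs with
    | nil =>
      rw [show (PreTree.node [] : PreTree) = leaf from rfl, termPositions_leaf]; simp
    | cons c ts =>
      rw [termPositions_node_cons]
      constructor
      · intro h
        rcases termPosList_decomp _ 0 _ h with ⟨A, c', B, p, _, hq, _⟩
        simp at hq
      · intro h; rw [show leaf = PreTree.node [] from rfl] at h; simp at h

lemma ne_leaf_iff (t : PreTree) : t ≠ leaf ↔ ∃ d ds, t = .node (d :: ds) := by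
  cases t with
  | node cs =>
    cases cs with
    | nil => simp [leaf]
    | cons d ds => simp [leaf]

lemma size_induction (P : PreTree → Prop) (h : ∀ t, (∀ s, size s < size t → P s) → P t) :
    ∀ t, P t := by
  have H : ∀ n t, size t ≤ n → P t := by
    intro n
    induction n with
    | zero => intro t ht; have := size_pos t; omega
    | succ n ih => intro t ht; exact h t (fun s hs => ih s (by omega))
  exact fun t => H (size t) t le_rfl

lemma termPositions_ne_nil : ∀ (t : PreTree), termPositions t ≠ [] := by
  intro t
  induction t using size_induction with
  | h t ih =>
  cases t with
  | node cs =>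
    cases cs with
    | nil =>
      rw [show (PreTree.node [] : PreTree) = leaf from rfl, termPositions_leaf]; simp
    | cons c ts =>
      rw [termPositions_node_cons, termPositionsList]
      have : termPositions c ≠ [] := ih c (size_lt_of_mem List.mem_cons_self)
      simp [this]

/-! ### size of addLeafAt / removeAt -/

lemma size_addLeafAt : ∀ (t : PreTree) (p : List ℕ), p ∈ positions t →
    size (addLeafAt t p) = size t + 1 := by
  intro t
  induction t using size_induction with
  | h t ih =>
  intro p hp
  cases t with
  | node cs =>
    rw [positions_node] at hp
    rcases List.mem_cons.1 hp with rfl | hp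
    · show size (.node (cs ++ [leaf])) = _
      rw [size_node, size_node, sizeList_append]; rfl
    · rcases posList_decomp cs 0 p hp with ⟨A, c, B, p', rfl, rfl, hp'⟩
      rw [Nat.zero_add]
      show size (.node (addLeafAtList (A ++ c :: B) A.length p')) = _
      rw [addLeafAtList_append, size_node, size_node, sizeList_append, sizeList_append,
        sizeList_cons, sizeList_cons]
      have hszc : size (addLeafAt c p') = size c + 1 :=
        ih c (size_lt_of_mem (by simp)) p' hp'
      omega

lemma size_removeAt : ∀ (t : PreTree) (q : List ℕ), q ∈ termPositions t → t ≠ leaf →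
    size (removeAt t q) + 1 = size t := by
  intro t
  induction t using size_induction with
  | h t ih =>
  intro q hq hne
  rcases (ne_leaf_iff t).1 hne with ⟨d, ds, rfl⟩
  rw [termPositions_node_cons] at hq
  rcases termPosList_decomp _ 0 q hq with ⟨A, c, B, p, hcs, rfl, hp⟩
  rw [Nat.zero_add]
  cases p with
  | nil =>
    have hc : c = leaf := (termPos_nil_iff c).1 hp
    show size (.node ((d :: ds).eraseIdx A.length)) + 1 = _
    rw [hcs, eraseIdx_append, size_node, size_node, sizeList_append, sizeList_append,
      sizeList_cons, hc]
    have hl : size leaf = 1 := rfl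
    omega
  | cons x p' =>
    show size (.node (removeAtList (d :: ds) A.length (x :: p'))) + 1 = _
    rw [hcs, removeAtList_append, size_node, size_node, sizeList_append, sizeList_append,
      sizeList_cons, sizeList_cons]
    have hcne : c ≠ leaf := by
      intro h; subst h
      rw [termPositions_leaf] at hp; simp at hp
    have hszc : size (removeAt c (x :: p')) + 1 = size c := by
      have hlt : size c < size (.node (d :: ds)) := size_lt_of_mem (by rw [hcs]; simp)
      exact ih c hlt (x :: p') hp hcne
    omega

end PreTree
namespace PreTree

/-! ### canonical node of a multiset of children, and the a/r multisets -/

noncomputable def N (m : Multiset PreTree) : PreTree :=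
  .node (m.toList.mergeSort (fun a b => enc a ≤ enc b))

lemma N_coe (l : List PreTree) :
    N ↑l = .node (l.mergeSort (fun a b => enc a ≤ enc b)) := by
  rw [N]
  congr 1
  exact mergeSort_perm_eq (Multiset.coe_eq_coe.1 (by rw [Multiset.coe_toList]))

lemma canon_node_N (cs : List PreTree) :
    canon (.node cs) = N ↑(cs.map canon) := by
  rw [canon_node, N_coe]

def aMS (t : PreTree) : Multiset PreTree :=
  ((positions t).map (fun p => canon (addLeafAt t p)) : List PreTree)

def rMS (t : PreTree) : Multiset PreTree :=
  ((termPositions t).map (fun q => canon (removeAt t q)) : List PreTree)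

def rS (t : PreTree) : Multiset PreTree := if size t = 1 then 0 else rMS t

lemma size_eq_one_iff (t : PreTree) : size t = 1 ↔ t = leaf := by
  cases t with
  | node cs =>
    cases cs with
    | nil => simp [leaf, size_node, sizeList_nil]
    | cons c ts =>
      rw [size_node, sizeList_cons]
      have := size_pos c
      constructor
      · omega
      · intro h; rw [show leaf = PreTree.node [] from rfl] at h; simp at h

lemma rS_leaf : rS leaf = 0 := by rw [rS, if_pos]; rfl

lemma rS_of_ne_leaf {t : PreTree} (h : t ≠ leaf) : rS t = rMS t := by
  rw [rS, if_neg (fun hs => h ((size_eq_one_iff t).1 hs))]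

lemma canon_eq_leaf_iff (t : PreTree) : canon t = leaf ↔ t = leaf := by
  rw [← size_eq_one_iff, ← size_eq_one_iff t, size_canon]

lemma termPos_cons_shape {c : PreTree} (hc : c ≠ leaf) {p : List ℕ}
    (hp : p ∈ termPositions c) : ∃ x p', p = x :: p' := by
  rcases (ne_leaf_iff c).1 hc with ⟨d, ds, rfl⟩
  rw [termPositions_node_cons] at hp
  rcases termPosList_decomp _ 0 p hp with ⟨A, c', B, p', _, rfl, _⟩
  exact ⟨_, _, rfl⟩

/-- key multiset identity for replacing the `c` entry -/
lemma hM_lemma (pre ts : List PreTree) (c x : PreTree) :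
    (↑((pre ++ x :: ts).map canon) : Multiset PreTree)
      = canon x ::ₘ ((↑((pre ++ c :: ts).map canon) : Multiset PreTree)).erase (canon c) := by
  have h1 : (↑((pre ++ c :: ts).map canon) : Multiset PreTree)
      = ↑(pre.map canon) + canon c ::ₘ ↑(ts.map canon) := by
    simp [Multiset.cons_coe]
  have h2 : (↑((pre ++ x :: ts).map canon) : Multiset PreTree)
      = ↑(pre.map canon) + canon x ::ₘ ↑(ts.map canon) := by
    simp [Multiset.cons_coe]
  rw [h1, h2, ms_erase_add_cons, Multiset.add_cons]

lemma erase_leaf_lemma (pre ts : List PreTree) :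
    ((↑((pre ++ leaf :: ts).map canon) : Multiset PreTree)).erase leaf
      = ↑((pre ++ ts).map canon) := by
  have h1 : (↑((pre ++ leaf :: ts).map canon) : Multiset PreTree)
      = ↑(pre.map canon) + leaf ::ₘ ↑(ts.map canon) := by
    simp [Multiset.cons_coe, canon_leaf]
  rw [h1, ms_erase_add_cons]
  simp

lemma aux_a : ∀ (cs : List PreTree), ∀ (pre : List PreTree),
    (((positionsList pre.length cs).map
        (fun q => canon (addLeafAt (.node (pre ++ cs)) q)) : List PreTree) : Multiset PreTree)
    = (↑cs : Multiset PreTree).bind (fun c => (aMS c).map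
        (fun x => N (x ::ₘ ((↑((pre ++ cs).map canon) : Multiset PreTree)).erase (canon c)))) := by
  intro cs
  induction cs with
  | nil => intro pre; simp [positionsList]
  | cons c ts ih =>
    intro pre
    rw [positionsList, List.map_append, ← Multiset.coe_add]
    rw [← Multiset.cons_coe, Multiset.cons_bind]
    congr 1
    · -- head chunk
      rw [List.map_map]
      have hpt : ((fun q => canon (addLeafAt (.node (pre ++ c :: ts)) q))
            ∘ (fun p => pre.length :: p))
          = (fun p => N (canon (addLeafAt c p) ::ₘ
              ((↑((pre ++ c :: ts).map canon) : Multiset PreTree)).erase (canon c))) := by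
        funext p
        show canon (addLeafAt (.node (pre ++ c :: ts)) (pre.length :: p)) = _
        have : addLeafAt (.node (pre ++ c :: ts)) (pre.length :: p)
            = .node (pre ++ addLeafAt c p :: ts) := by
          show PreTree.node (addLeafAtList (pre ++ c :: ts) pre.length p) = _
          rw [addLeafAtList_append]
        rw [this, canon_node_N, hM_lemma pre ts c (addLeafAt c p)]
      rw [hpt]
      rw [aMS, Multiset.map_coe, List.map_map]
      rfl
    · -- tail chunk
      have harr : pre.length + 1 = (pre ++ [c]).length := by simp
      have harr2 : pre ++ c :: ts = (pre ++ [c]) ++ ts := by simp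
      rw [harr2, harr, ih (pre ++ [c])]

lemma aux_r : ∀ (cs : List PreTree), ∀ (pre : List PreTree),
    (((termPositionsList pre.length cs).map
        (fun q => canon (removeAt (.node (pre ++ cs)) q)) : List PreTree) : Multiset PreTree)
    = (↑cs : Multiset PreTree).bind (fun c =>
        (if c = leaf then {N (((↑((pre ++ cs).map canon) : Multiset PreTree)).erase leaf)} else 0)
        + (rS c).map
          (fun x => N (x ::ₘ ((↑((pre ++ cs).map canon) : Multiset PreTree)).erase (canon c)))) := by
  intro cs
  induction cs with
  | nil => intro pre; simp [termPositionsList]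
  | cons c ts ih =>
    intro pre
    rw [termPositionsList, List.map_append, ← Multiset.coe_add]
    rw [← Multiset.cons_coe, Multiset.cons_bind]
    congr 1
    · -- head chunk
      by_cases hc : c = leaf
      · subst hc
        rw [if_pos rfl, rS_leaf]
        show (↑(([[pre.length]] : List (List ℕ)).map
          (fun q => canon (removeAt (.node (pre ++ leaf :: ts)) q))) : Multiset PreTree) = _
        have : removeAt (.node (pre ++ leaf :: ts)) [pre.length]
            = .node ((pre ++ leaf :: ts).eraseIdx pre.length) := rfl
        rw [List.map_cons, List.map_nil, this]
        have : (pre ++ leaf :: ts).eraseIdx pre.length = pre ++ ts := eraseIdx_append pre leaf ts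
        rw [this, canon_node_N, ← erase_leaf_lemma pre ts]
        simp
      · rw [if_neg hc, rS_of_ne_leaf hc, zero_add]
        rw [List.map_map]
        have hpt : ∀ p ∈ termPositions c,
            ((fun q => canon (removeAt (.node (pre ++ c :: ts)) q))
              ∘ (fun p => pre.length :: p)) p
            = N (canon (removeAt c p) ::ₘ
                ((↑((pre ++ c :: ts).map canon) : Multiset PreTree)).erase (canon c)) := by
          intro p hp
          rcases termPos_cons_shape hc hp with ⟨x, p', rfl⟩
          show canon (removeAt (.node (pre ++ c :: ts)) (pre.length :: x :: p')) = _
          have : removeAt (.node (pre ++ c :: ts)) (pre.length :: x :: p')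
              = .node (pre ++ removeAt c (x :: p') :: ts) := by
            show PreTree.node (removeAtList (pre ++ c :: ts) pre.length (x :: p')) = _
            rw [removeAtList_append]
          rw [this, canon_node_N, hM_lemma pre ts c (removeAt c (x :: p'))]
        rw [List.map_congr_left hpt]
        rw [rMS, Multiset.map_coe, List.map_map]
        rfl
    · -- tail chunk
      have harr : pre.length + 1 = (pre ++ [c]).length := by simp
      have harr2 : pre ++ c :: ts = (pre ++ [c]) ++ ts := by simp
      rw [harr2, harr, ih (pre ++ [c])]

lemma aMS_node (cs : List PreTree) :
    aMS (.node cs) = N (leaf ::ₘ ↑(cs.map canon)) ::ₘ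
      (↑cs : Multiset PreTree).bind (fun c => (aMS c).map
        (fun x => N (x ::ₘ ((↑(cs.map canon) : Multiset PreTree)).erase (canon c)))) := by
  have h0 : aMS (.node cs)
      = canon (addLeafAt (.node cs) []) ::ₘ
        (((positionsList 0 cs).map
          (fun q => canon (addLeafAt (.node cs) q)) : List PreTree) : Multiset PreTree) := by
    rw [aMS, positions_node, List.map_cons, ← Multiset.cons_coe]
  rw [h0]
  have := aux_a cs []
  rw [List.nil_append] at this
  rw [show (0 : ℕ) = List.length ([] : List PreTree) from rfl, this]
  congr 1
  show canon (.node (cs ++ [leaf])) = _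
  rw [canon_node_N]
  congr 1
  rw [List.map_append]
  rw [show ([leaf].map canon : List PreTree) = [leaf] by simp [canon_leaf]]
  rw [show ((↑(cs.map canon ++ [leaf]) : Multiset PreTree))
      = ↑(cs.map canon) + ↑([leaf] : List PreTree) from rfl]
  rw [show (↑([leaf] : List PreTree) : Multiset PreTree) = leaf ::ₘ 0 from rfl,
    Multiset.add_cons, add_zero]

lemma rMS_node (c0 : PreTree) (ts0 : List PreTree) :
    rMS (.node (c0 :: ts0)) = (↑(c0 :: ts0) : Multiset PreTree).bind (fun c =>
        (if c = leaf then
          {N (((↑((c0 :: ts0).map canon) : Multiset PreTree)).erase leaf)} else 0)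
        + (rS c).map
          (fun x => N (x ::ₘ ((↑((c0 :: ts0).map canon) : Multiset PreTree)).erase (canon c)))) := by
  have h0 : rMS (.node (c0 :: ts0))
      = (((termPositionsList 0 (c0 :: ts0)).map
          (fun q => canon (removeAt (.node (c0 :: ts0)) q)) : List PreTree) : Multiset PreTree) := by
    rw [rMS, termPositions_node_cons]
  rw [h0]
  have := aux_r (c0 :: ts0) []
  rw [List.nil_append] at this
  rw [show (0 : ℕ) = List.length ([] : List PreTree) from rfl, this]

end PreTree
namespace PreTree

lemma map_canon_eq_self {l : List PreTree} (h : ∀ c ∈ l, canon c = c) : l.map canon = l := by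
  rw [List.map_congr_left (g := id) h, List.map_id]

lemma N_list_spec (m : Multiset PreTree) (hm : ∀ c ∈ m, canon c = c) :
    ∃ l : List PreTree, N m = .node l ∧ (↑l : Multiset PreTree) = m
      ∧ l.map canon = l ∧ (l = [] ↔ m = 0) := by
  refine ⟨m.toList.mergeSort (fun a b => enc a ≤ enc b), rfl, ?_, ?_, ?_⟩
  · rw [Multiset.coe_eq_coe.2 (m.toList.mergeSort_perm _), Multiset.coe_toList]
  · apply map_canon_eq_self
    intro c hc
    exact hm c (by
      have h2 : c ∈ m.toList := (m.toList.mergeSort_perm _).mem_iff.1 hc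
      exact (Multiset.mem_toList).1 h2)
  · constructor
    · intro h
      have h2 := congrArg List.length h
      rw [List.length_mergeSort] at h2
      have h3 : m.toList = [] := List.eq_nil_of_length_eq_zero (by simpa using h2)
      rw [← Multiset.coe_toList m, h3]; rfl
    · intro h
      subst h
      rw [show (Multiset.toList (0 : Multiset PreTree)) = [] by simp, List.mergeSort_nil]

lemma aMS_N (m : Multiset PreTree) (hm : ∀ c ∈ m, canon c = c) :
    aMS (N m) = N (leaf ::ₘ m) ::ₘ
      m.bind (fun c => (aMS c).map (fun x => N (x ::ₘ m.erase c))) := by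
  rcases N_list_spec m hm with ⟨l, hNl, hlm, hlc, -⟩
  rw [hNl, aMS_node, hlc, hlm]
  congr 1
  rw [← hlm]
  apply Multiset.bind_congr
  intro c hc
  rw [hm c (hlm ▸ hc)]

lemma rMS_N (m : Multiset PreTree) (hm : ∀ c ∈ m, canon c = c) (hne : m ≠ 0) :
    rMS (N m) = m.bind (fun c =>
      (if c = leaf then {N (m.erase leaf)} else 0)
      + (rS c).map (fun x => N (x ::ₘ m.erase c))) := by
  rcases N_list_spec m hm with ⟨l, hNl, hlm, hlc, hnil⟩
  cases l with
  | nil => exact absurd (hnil.1 rfl) hne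
  | cons c0 ts0 =>
    rw [hNl, rMS_node]
    rw [show ((c0 :: ts0).map canon : List PreTree) = c0 :: ts0 from hlc, hlm]
    rw [← hlm]
    apply Multiset.bind_congr
    intro c hc
    rw [hm c (hlm ▸ hc)]

/-! ### invariance of aMS, rMS under canon -/

lemma canon_children_canonical (cs : List PreTree) :
    ∀ c ∈ (↑(cs.map canon) : Multiset PreTree), canon c = c := by
  intro c hc
  rcases List.mem_map.1 (Multiset.mem_coe.1 hc) with ⟨c0, _, rfl⟩
  exact canon_idem c0

lemma aMS_canon : ∀ t : PreTree, aMS (canon t) = aMS t := by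
  intro t
  induction t using size_induction with
  | h t ih =>
  cases t with
  | node cs =>
    rw [canon_node_N, aMS_N _ (canon_children_canonical cs), aMS_node]
    congr 1
    rw [← Multiset.map_coe, Multiset.bind_map]
    apply Multiset.bind_congr
    intro c hc
    rw [ih c (size_lt_of_mem (Multiset.mem_coe.1 hc))]

lemma rMS_canon : ∀ t : PreTree, rMS (canon t) = rMS t := by
  intro t
  induction t using size_induction with
  | h t ih =>
  cases t with
  | node cs =>
    cases cs with
    | nil =>
      rw [show (PreTree.node [] : PreTree) = leaf from rfl, canon_leaf]
    | cons c0 ts0 =>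
      have hne : (↑((c0 :: ts0).map canon) : Multiset PreTree) ≠ 0 := by
        simp
      rw [canon_node_N, rMS_N _ (canon_children_canonical (c0 :: ts0)) hne, rMS_node]
      rw [← Multiset.map_coe, Multiset.bind_map]
      apply Multiset.bind_congr
      intro c hc
      have hsz : size c < size (.node (c0 :: ts0)) := size_lt_of_mem (Multiset.mem_coe.1 hc)
      have h2 : rS (canon c) = rS c := by
        rw [rS, rS, size_canon, ih c hsz]
      rw [h2]
      congr 1
      by_cases hcl : c = leaf
      · rw [if_pos hcl, if_pos ((canon_eq_leaf_iff c).2 hcl)]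
      · rw [if_neg hcl, if_neg (fun h => hcl ((canon_eq_leaf_iff c).1 h))]

lemma rS_canon (t : PreTree) : rS (canon t) = rS t := by
  rw [rS, rS, size_canon, rMS_canon]

end PreTree
namespace PreTree

/-! ### element facts -/

lemma mem_aMS_canon {x t : PreTree} (h : x ∈ aMS t) : canon x = x := by
  rcases List.mem_map.1 (Multiset.mem_coe.1 h) with ⟨p, _, rfl⟩
  exact canon_idem _

lemma mem_aMS_size {x t : PreTree} (h : x ∈ aMS t) : size x = size t + 1 := by
  rcases List.mem_map.1 (Multiset.mem_coe.1 h) with ⟨p, hp, rfl⟩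
  rw [size_canon, size_addLeafAt t p hp]

lemma mem_aMS_ne_leaf {x t : PreTree} (h : x ∈ aMS t) : x ≠ leaf := by
  intro hx
  have h1 := mem_aMS_size h
  rw [hx] at h1
  have h2 : size leaf = 1 := rfl
  have := size_pos t
  omega

lemma mem_rS_canon {x t : PreTree} (h : x ∈ rS t) : canon x = x := by
  rw [rS] at h
  split at h
  · simp at h
  · rcases List.mem_map.1 (Multiset.mem_coe.1 h) with ⟨q, _, rfl⟩
    exact canon_idem _

lemma mem_rS_size {x t : PreTree} (h : x ∈ rS t) : size x + 1 = size t := by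
  rw [rS] at h
  by_cases hs : size t = 1
  · rw [if_pos hs] at h; simp at h
  · rw [if_neg hs] at h
    rcases List.mem_map.1 (Multiset.mem_coe.1 h) with ⟨q, hq, rfl⟩
    rw [size_canon]
    refine size_removeAt t q hq ?_
    intro hleaf
    exact hs (by rw [hleaf]; rfl)

lemma size_N (m : Multiset PreTree) : size (N m) = 1 + (m.map size).sum := by
  have hperm : (↑(m.toList.mergeSort (fun a b => enc a ≤ enc b)) : Multiset PreTree) = m := by
    rw [Multiset.coe_eq_coe.2 (m.toList.mergeSort_perm _), Multiset.coe_toList]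
  conv_rhs => rw [← hperm]
  rw [Multiset.map_coe, Multiset.sum_coe, N, size_node, sizeList_eq_sum]

lemma ms_map_nsmul {α β : Type*} (n : ℕ) (s : Multiset α) (f : α → β) :
    (n • s).map f = n • (s.map f) := by
  induction n with
  | zero => simp
  | succ k ih => rw [succ_nsmul, succ_nsmul, Multiset.map_add, ih]

/-! ### the core commutation computation -/

lemma Dcore (m : Multiset PreTree) (hm : ∀ c ∈ m, canon c = c) (hne : m ≠ 0)
    (IH : ∀ c ∈ m, (aMS c).bind rMS = size c • ({c} : Multiset PreTree) + (rS c).bind aMS) :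
    (aMS (N m)).bind rMS = size (N m) • ({N m} : Multiset PreTree) + (rS (N m)).bind aMS := by
  classical
  -- canonicity of various sub-multisets
  have hm' : ∀ c ∈ m, ∀ d ∈ m.erase c, canon d = d :=
    fun c _ d hd => hm d (Multiset.mem_of_mem_erase hd)
  have hmleaf : ∀ c ∈ (leaf ::ₘ m), canon c = c := by
    intro c hc
    rcases Multiset.mem_cons.1 hc with rfl | hc
    · exact canon_leaf
    · exact hm c hc
  -- abbreviations
  set NM := N m with hNM
  -- LHS head: rMS (N (leaf ::ₘ m))
  have hTerm1 : rMS (N (leaf ::ₘ m))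
      = {NM} + (m.bind fun c => if c = leaf then ({NM} : Multiset PreTree) else 0)
        + (m.bind fun c => (rS c).map fun x => N (x ::ₘ leaf ::ₘ m.erase c)) := by
    rw [rMS_N (leaf ::ₘ m) hmleaf (Multiset.cons_ne_zero), Multiset.cons_bind]
    have hb : (m.bind fun c =>
        (if c = leaf then ({N ((leaf ::ₘ m).erase leaf)} : Multiset PreTree) else 0)
          + (rS c).map fun x => N (x ::ₘ (leaf ::ₘ m).erase c))
        = (m.bind fun c => (if c = leaf then ({NM} : Multiset PreTree) else 0)
          + (rS c).map fun x => N (x ::ₘ leaf ::ₘ m.erase c)) := by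
      apply Multiset.bind_congr
      intro c hc
      rw [Multiset.erase_cons_head, ms_erase_cons_of_mem leaf hc, ← hNM]
    rw [hb, Multiset.bind_add]
    rw [if_pos rfl, Multiset.erase_cons_head, rS_leaf, Multiset.map_zero, add_zero, ← hNM]
    abel
  -- LHS per-pair expansion
  have hInner : ∀ c ∈ m, ∀ x ∈ aMS c,
      rMS (N (x ::ₘ m.erase c))
        = (rMS x).map (fun y => N (y ::ₘ m.erase c))
          + ((m.erase c).bind fun d =>
              (if d = leaf then ({N (x ::ₘ (m.erase c).erase d)} : Multiset PreTree) else 0)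
              + (rS d).map fun y => N (y ::ₘ x ::ₘ (m.erase c).erase d)) := by
    intro c hc x hx
    have hcanx : ∀ d ∈ (x ::ₘ m.erase c), canon d = d := by
      intro d hd
      rcases Multiset.mem_cons.1 hd with rfl | hd
      · exact mem_aMS_canon hx
      · exact hm' c hc d hd
    rw [rMS_N _ hcanx (Multiset.cons_ne_zero), Multiset.cons_bind]
    rw [if_neg (mem_aMS_ne_leaf hx), zero_add, Multiset.erase_cons_head,
      rS_of_ne_leaf (mem_aMS_ne_leaf hx)]
    congr 1
    apply Multiset.bind_congr
    intro d hd
    rw [ms_erase_cons_of_mem x hd]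
    congr 1
    by_cases hdl : d = leaf
    · subst hdl
      rw [if_pos rfl, if_pos rfl, ms_erase_cons_of_mem x hd]
    · rw [if_neg hdl, if_neg hdl]
  -- now expand the LHS
  have hL : (aMS NM).bind rMS
      = ({NM} + (m.bind fun c => if c = leaf then ({NM} : Multiset PreTree) else 0)
          + (m.bind fun c => (rS c).map fun x => N (x ::ₘ leaf ::ₘ m.erase c)))
        + ((m.bind fun c => (aMS c).bind fun x => (rMS x).map fun y => N (y ::ₘ m.erase c))
          + (m.bind fun c => (aMS c).bind fun x => (m.erase c).bind fun d =>
              (if d = leaf then ({N (x ::ₘ (m.erase c).erase d)} : Multiset PreTree) else 0))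
          + (m.bind fun c => (aMS c).bind fun x => (m.erase c).bind fun d =>
              (rS d).map fun y => N (y ::ₘ x ::ₘ (m.erase c).erase d))) := by
    rw [hNM, aMS_N m hm, Multiset.cons_bind, ← hNM, hTerm1, Multiset.bind_assoc]
    congr 1
    have h1 : (m.bind fun c => ((aMS c).map fun x => N (x ::ₘ m.erase c)).bind rMS)
        = m.bind fun c => (aMS c).bind fun x =>
            ((rMS x).map (fun y => N (y ::ₘ m.erase c))
            + ((m.erase c).bind fun d =>
              (if d = leaf then ({N (x ::ₘ (m.erase c).erase d)} : Multiset PreTree) else 0)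
              + (rS d).map fun y => N (y ::ₘ x ::ₘ (m.erase c).erase d))) := by
      apply Multiset.bind_congr
      intro c hc
      rw [Multiset.bind_map]
      apply Multiset.bind_congr
      intro x hx
      exact hInner c hc x hx
    rw [h1]
    have h2 : (m.bind fun c => (aMS c).bind fun x =>
        ((rMS x).map (fun y => N (y ::ₘ m.erase c))
          + ((m.erase c).bind fun d =>
            (if d = leaf then ({N (x ::ₘ (m.erase c).erase d)} : Multiset PreTree) else 0)
            + (rS d).map fun y => N (y ::ₘ x ::ₘ (m.erase c).erase d))))
        = (m.bind fun c => (aMS c).bind fun x => (rMS x).map fun y => N (y ::ₘ m.erase c))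
          + (m.bind fun c => (aMS c).bind fun x => (m.erase c).bind fun d =>
            (if d = leaf then ({N (x ::ₘ (m.erase c).erase d)} : Multiset PreTree) else 0)
            + (rS d).map fun y => N (y ::ₘ x ::ₘ (m.erase c).erase d)) := by
      rw [← Multiset.bind_add]
      apply Multiset.bind_congr
      intro c _
      rw [← Multiset.bind_add]
    rw [h2]
    have h3 : (m.bind fun c => (aMS c).bind fun x => (m.erase c).bind fun d =>
        (if d = leaf then ({N (x ::ₘ (m.erase c).erase d)} : Multiset PreTree) else 0)
        + (rS d).map fun y => N (y ::ₘ x ::ₘ (m.erase c).erase d))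
        = (m.bind fun c => (aMS c).bind fun x => (m.erase c).bind fun d =>
            (if d = leaf then ({N (x ::ₘ (m.erase c).erase d)} : Multiset PreTree) else 0))
          + (m.bind fun c => (aMS c).bind fun x => (m.erase c).bind fun d =>
            (rS d).map fun y => N (y ::ₘ x ::ₘ (m.erase c).erase d)) := by
      rw [← Multiset.bind_add]
      apply Multiset.bind_congr
      intro c _
      rw [← Multiset.bind_add]
      apply Multiset.bind_congr
      intro x _
      rw [← Multiset.bind_add]
    rw [h3]
    abel
  -- transform the "same pair" term using IH
  have hT2 : (m.bind fun c => (aMS c).bind fun x => (rMS x).map fun y => N (y ::ₘ m.erase c))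
      = ((m.map size).sum • ({NM} : Multiset PreTree))
        + (m.bind fun c => ((rS c).bind aMS).map fun y => N (y ::ₘ m.erase c)) := by
    have h1 : (m.bind fun c => (aMS c).bind fun x => (rMS x).map fun y => N (y ::ₘ m.erase c))
        = m.bind fun c => (size c • ({NM} : Multiset PreTree)
            + ((rS c).bind aMS).map fun y => N (y ::ₘ m.erase c)) := by
      apply Multiset.bind_congr
      intro c hc
      rw [← Multiset.map_bind, IH c hc, Multiset.map_add, ms_map_nsmul]
      congr 2
      rw [Multiset.map_singleton, Multiset.cons_erase hc, hNM]
    rw [h1, Multiset.bind_add, ms_bind_nsmul]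
  -- RHS expansion
  have hrsNM : rS NM = rMS NM := by
    apply rS_of_ne_leaf
    intro h
    have h1 : size NM = 1 := by rw [h]; rfl
    rw [hNM, size_N] at h1
    rcases Multiset.exists_mem_of_ne_zero hne with ⟨c, hc⟩
    have h2 : size c ≤ (m.map size).sum :=
      Multiset.single_le_sum (fun x _ => Nat.zero_le x) _ (Multiset.mem_map_of_mem _ hc)
    have := size_pos c
    omega
  have hR : (rS NM).bind aMS
      = ((m.bind fun c => if c = leaf then ({NM} : Multiset PreTree) else 0)
          + (m.bind fun c => if c = leaf then
              ((m.erase c).bind fun d => (aMS d).map fun z => N (z ::ₘ (m.erase c).erase d))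
            else 0))
        + ((m.bind fun c => (rS c).bind fun x => ({N (leaf ::ₘ x ::ₘ m.erase c)} : Multiset PreTree))
          + (m.bind fun c => (rS c).bind fun x => (aMS x).map fun z => N (z ::ₘ m.erase c))
          + (m.bind fun c => (rS c).bind fun x => (m.erase c).bind fun d =>
              (aMS d).map fun z => N (z ::ₘ x ::ₘ (m.erase c).erase d))) := by
    rw [hrsNM, hNM, rMS_N m hm hne, ← hNM, Multiset.bind_assoc]
    have h1 : (m.bind fun c =>
        ((if c = leaf then ({N (m.erase leaf)} : Multiset PreTree) else 0)
          + (rS c).map fun x => N (x ::ₘ m.erase c)).bind aMS)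
        = m.bind fun c =>
          ((if c = leaf then ({NM} : Multiset PreTree) else 0)
            + (if c = leaf then
                ((m.erase c).bind fun d => (aMS d).map fun z => N (z ::ₘ (m.erase c).erase d))
              else 0))
          + ((rS c).bind fun x =>
              ({N (leaf ::ₘ x ::ₘ m.erase c)} : Multiset PreTree)
              + ((aMS x).map fun z => N (z ::ₘ m.erase c))
              + ((m.erase c).bind fun d => (aMS d).map fun z => N (z ::ₘ x ::ₘ (m.erase c).erase d))) := by
      apply Multiset.bind_congr
      intro c hc
      rw [Multiset.add_bind, Multiset.bind_map]
      congr 1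
      · -- the leaf-branch term
        by_cases hcl : c = leaf
        · subst hcl
          rw [if_pos rfl, if_pos rfl, if_pos rfl, Multiset.singleton_bind]
          have hcane : ∀ d ∈ m.erase leaf, canon d = d := hm' leaf hc
          rw [aMS_N _ hcane]
          rw [show leaf ::ₘ (m.erase leaf) = m from Multiset.cons_erase hc, ← hNM]
          rw [← Multiset.singleton_add]
        · rw [if_neg hcl, if_neg hcl, if_neg hcl, Multiset.zero_bind, add_zero]
      · -- the rS-branch term
        apply Multiset.bind_congr
        intro x hx
        have hcanx : ∀ d ∈ (x ::ₘ m.erase c), canon d = d := by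
          intro d hd
          rcases Multiset.mem_cons.1 hd with rfl | hd
          · exact mem_rS_canon hx
          · exact hm' c hc d hd
        rw [aMS_N _ hcanx, Multiset.cons_bind, Multiset.erase_cons_head]
        rw [← Multiset.singleton_add]
        have hb : ((m.erase c).bind fun d =>
            (aMS d).map fun z => N (z ::ₘ (x ::ₘ m.erase c).erase d))
            = (m.erase c).bind fun d => (aMS d).map fun z => N (z ::ₘ x ::ₘ (m.erase c).erase d) := by
          apply Multiset.bind_congr
          intro d hd
          rw [ms_erase_cons_of_mem x hd]
        rw [hb]
        all_goals abel
    rw [h1]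
    have h2 : ∀ (f g h : PreTree → Multiset PreTree),
        (m.bind fun c => f c + g c + h c) = m.bind f + m.bind g + m.bind h := by
      intro f g h
      rw [← Multiset.bind_add, ← Multiset.bind_add]
    have h3 : (m.bind fun c =>
          ((if c = leaf then ({NM} : Multiset PreTree) else 0)
            + (if c = leaf then
                ((m.erase c).bind fun d => (aMS d).map fun z => N (z ::ₘ (m.erase c).erase d))
              else 0))
          + ((rS c).bind fun x =>
              ({N (leaf ::ₘ x ::ₘ m.erase c)} : Multiset PreTree)
              + ((aMS x).map fun z => N (z ::ₘ m.erase c))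
              + ((m.erase c).bind fun d => (aMS d).map fun z => N (z ::ₘ x ::ₘ (m.erase c).erase d))))
        = ((m.bind fun c => if c = leaf then ({NM} : Multiset PreTree) else 0)
            + (m.bind fun c => if c = leaf then
                ((m.erase c).bind fun d => (aMS d).map fun z => N (z ::ₘ (m.erase c).erase d))
              else 0))
          + ((m.bind fun c => (rS c).bind fun x => ({N (leaf ::ₘ x ::ₘ m.erase c)} : Multiset PreTree))
            + (m.bind fun c => (rS c).bind fun x => (aMS x).map fun z => N (z ::ₘ m.erase c))
            + (m.bind fun c => (rS c).bind fun x => (m.erase c).bind fun d =>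
                (aMS d).map fun z => N (z ::ₘ x ::ₘ (m.erase c).erase d))) := by
      rw [← Multiset.bind_add, ← Multiset.bind_add, ← Multiset.bind_add, ← Multiset.bind_add]
      apply Multiset.bind_congr
      intro c _
      rw [← Multiset.bind_add, ← Multiset.bind_add]
      all_goals abel
    rw [h3]
  -- chunk equality E1
  have hE1 : (m.bind fun c => (rS c).map fun x => N (x ::ₘ leaf ::ₘ m.erase c))
      = m.bind fun c => (rS c).bind fun x => ({N (leaf ::ₘ x ::ₘ m.erase c)} : Multiset PreTree) := by
    apply Multiset.bind_congr
    intro c _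
    rw [Multiset.bind_singleton]
    apply Multiset.map_congr rfl
    intro x _
    rw [Multiset.cons_swap]
  -- chunk equality E2
  have hE2 : (m.bind fun c => ((rS c).bind aMS).map fun y => N (y ::ₘ m.erase c))
      = m.bind fun c => (rS c).bind fun x => (aMS x).map fun z => N (z ::ₘ m.erase c) := by
    apply Multiset.bind_congr
    intro c _
    rw [Multiset.map_bind]
  -- chunk equality E3
  have hE3 : (m.bind fun c => (aMS c).bind fun x => (m.erase c).bind fun d =>
        (if d = leaf then ({N (x ::ₘ (m.erase c).erase d)} : Multiset PreTree) else 0))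
      = m.bind fun c => if c = leaf then
          ((m.erase c).bind fun d => (aMS d).map fun z => N (z ::ₘ (m.erase c).erase d))
        else 0 := by
    have h1 : (m.bind fun c => (aMS c).bind fun x => (m.erase c).bind fun d =>
        (if d = leaf then ({N (x ::ₘ (m.erase c).erase d)} : Multiset PreTree) else 0))
        = m.bind fun c => (m.erase c).bind fun d =>
            (if d = leaf then ((aMS c).map fun x => N (x ::ₘ (m.erase c).erase d)) else 0) := by
      apply Multiset.bind_congr
      intro c _
      rw [Multiset.bind_bind]
      apply Multiset.bind_congr
      intro d _
      rw [ms_bind_if, Multiset.bind_singleton]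
    rw [h1, ps_swap]
    apply Multiset.bind_congr
    intro c _
    rw [ms_bind_if]
    by_cases hcl : c = leaf
    · rw [if_pos hcl, if_pos hcl]
      apply Multiset.bind_congr
      intro d _
      rw [Multiset.erase_comm]
    · rw [if_neg hcl, if_neg hcl]
  -- chunk equality E4
  have hE4 : (m.bind fun c => (aMS c).bind fun x => (m.erase c).bind fun d =>
        (rS d).map fun y => N (y ::ₘ x ::ₘ (m.erase c).erase d))
      = m.bind fun c => (rS c).bind fun x => (m.erase c).bind fun d =>
          (aMS d).map fun z => N (z ::ₘ x ::ₘ (m.erase c).erase d) := by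
    have h1 : (m.bind fun c => (aMS c).bind fun x => (m.erase c).bind fun d =>
        (rS d).map fun y => N (y ::ₘ x ::ₘ (m.erase c).erase d))
        = m.bind fun c => (m.erase c).bind fun d =>
            (aMS c).bind fun x => (rS d).map fun y => N (y ::ₘ x ::ₘ (m.erase c).erase d) := by
      apply Multiset.bind_congr
      intro c _
      rw [Multiset.bind_bind]
    rw [h1, ps_swap]
    apply Multiset.bind_congr
    intro c _
    rw [Multiset.bind_bind]
    apply Multiset.bind_congr
    intro d _
    rw [Multiset.erase_comm]
    rw [ms_bind_map_comm]
    apply Multiset.bind_congr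
    intro x _
    apply Multiset.map_congr rfl
    intro z _
    rw [Multiset.cons_swap]
  -- assemble
  rw [hL, hR, hT2, hE1, hE2, hE3, hE4]
  rw [hNM, size_N, add_smul, one_smul, ← hNM]
  abel

/-! ### the commutation identity -/

lemma Dmain : ∀ t : PreTree,
    (aMS t).bind rMS = size t • ({canon t} : Multiset PreTree) + (rS t).bind aMS := by
  intro t
  induction t using size_induction with
  | h t ih =>
  cases t with
  | node cs =>
    cases cs with
    | nil =>
      rw [show (PreTree.node [] : PreTree) = leaf from rfl]
      rw [rS_leaf, Multiset.zero_bind, add_zero, canon_leaf]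
      have h1 : aMS leaf = {canon (.node [leaf])} := by
        rw [aMS]
        rfl
      rw [h1, Multiset.singleton_bind]
      have h2 : rMS (canon (.node [leaf])) = {leaf} := by
        rw [rMS_canon]
        have h3 : rMS (.node [leaf]) = {canon leaf} := rfl
        rw [h3, canon_leaf]
      rw [h2, show size leaf = 1 from rfl, one_smul]
    | cons c0 ts0 =>
      set t := PreTree.node (c0 :: ts0) with ht
      set m : Multiset PreTree := ↑((c0 :: ts0).map canon) with hmdef
      have hcanon : canon t = N m := canon_node_N _
      have hm : ∀ c ∈ m, canon c = c := canon_children_canonical _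
      have hne : m ≠ 0 := by rw [hmdef]; simp
      have hIH : ∀ c ∈ m, (aMS c).bind rMS = size c • ({c} : Multiset PreTree) + (rS c).bind aMS := by
        intro c hc
        rcases List.mem_map.1 (Multiset.mem_coe.1 hc) with ⟨c0', hc0', rfl⟩
        have hlt : size (canon c0') < size t := by
          rw [size_canon]; exact size_lt_of_mem hc0'
        have := ih (canon c0') hlt
        rwa [canon_idem c0'] at this
      have hsz : size (N m) = size t := by
        rw [← hcanon, size_canon]
      have h := Dcore m hm hne hIH
      rw [← hcanon, aMS_canon, rS_canon, size_canon] at h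
      exact h

end PreTree
namespace PreTree

lemma treeList_zero : treeList 0 = [] := rfl
lemma treeList_one : treeList 1 = [leaf] := rfl
lemma treeList_succ2 (n : ℕ) : treeList (n + 2) =
    ((treeList (n + 1)).flatMap
      (fun t => (positions t).map (fun p => canon (addLeafAt t p)))).dedup := rfl

lemma mem_treeList : ∀ n : ℕ, ∀ t : PreTree, t ∈ treeList n → canon t = t ∧ size t = n := by
  intro n
  induction n using Nat.strong_induction_on with
  | _ n ih =>
  match n with
  | 0 => intro t ht; rw [treeList_zero] at ht; simp at ht
  | 1 =>
    intro t ht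
    rw [treeList_one] at ht
    rcases List.mem_singleton.1 ht with rfl
    exact ⟨canon_leaf, rfl⟩
  | (k + 2) =>
    intro t ht
    rw [treeList_succ2, List.mem_dedup] at ht
    rcases List.mem_flatMap.1 ht with ⟨u, hu, hmem⟩
    rcases List.mem_map.1 hmem with ⟨p, hp, rfl⟩
    rcases ih (k + 1) (by omega) u hu with ⟨hcu, hsu⟩
    refine ⟨canon_idem _, ?_⟩
    rw [size_canon, size_addLeafAt u p hp, hsu]

lemma mem_treeList_add {n : ℕ} (hn : 1 ≤ n) {t : PreTree} (ht : t ∈ treeList n)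
    {p : List ℕ} (hp : p ∈ positions t) : canon (addLeafAt t p) ∈ treeList (n + 1) := by
  match n, hn with
  | (k + 1), _ =>
    rw [treeList_succ2, List.mem_dedup]
    exact List.mem_flatMap.2 ⟨t, ht, List.mem_map.2 ⟨p, hp, rfl⟩⟩

lemma canon_mem_aMS_removeAt : ∀ t : PreTree, ∀ q ∈ termPositions t, t ≠ leaf →
    canon t ∈ aMS (removeAt t q) := by
  intro t
  induction t using size_induction with
  | h t ih =>
  intro q hq hne
  rcases (ne_leaf_iff t).1 hne with ⟨d, ds, rfl⟩
  rw [termPositions_node_cons] at hq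
  rcases termPosList_decomp _ 0 q hq with ⟨A, c, B, p, hcs, rfl, hp⟩
  rw [Nat.zero_add]
  cases p with
  | nil =>
    have hc : c = leaf := (termPos_nil_iff c).1 hp
    have hrm : removeAt (.node (d :: ds)) [A.length] = .node ((d :: ds).eraseIdx A.length) := rfl
    rw [hrm, hcs, eraseIdx_append]
    -- use the root position
    apply Multiset.mem_coe.2
    apply List.mem_map.2
    refine ⟨[], List.mem_cons_self, ?_⟩
    show canon (.node ((A ++ B) ++ [leaf])) = canon (.node (A ++ c :: B))
    rw [canon_node_N, canon_node_N]
    congr 1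
    subst hc
    have hperm : ((A ++ B) ++ [leaf] : List PreTree).Perm (A ++ leaf :: B) :=
      (List.perm_append_singleton leaf (A ++ B)).trans List.perm_middle.symm
    exact Multiset.coe_eq_coe.2 (hperm.map canon)
  | cons x p' =>
    have hrm : removeAt (.node (d :: ds)) (A.length :: x :: p')
        = .node (removeAtList (d :: ds) A.length (x :: p')) := rfl
    have hcne : c ≠ leaf := by
      intro h; subst h; rw [termPositions_leaf] at hp; simp at hp
    have hszc : size c < size (.node (d :: ds)) := size_lt_of_mem (by rw [hcs]; simp)
    have hih := ih c hszc (x :: p') hp hcne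
    rcases List.mem_map.1 (Multiset.mem_coe.1 hih) with ⟨p'', hp'', heq⟩
    rw [hrm, hcs, removeAtList_append]
    apply Multiset.mem_coe.2
    apply List.mem_map.2
    refine ⟨A.length :: p'', ?_, ?_⟩
    · rw [positions_node]
      refine List.mem_cons.2 (Or.inr ?_)
      have := posList_intro A 0 (removeAt c (x :: p')) B p'' hp''
      rwa [Nat.zero_add] at this
    · have hadd : addLeafAt (.node (A ++ removeAt c (x :: p') :: B)) (A.length :: p'')
          = .node (A ++ addLeafAt (removeAt c (x :: p')) p'' :: B) := by
        show PreTree.node (addLeafAtList (A ++ removeAt c (x :: p') :: B) A.length p'') = _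
        rw [addLeafAtList_append]
      rw [hadd, canon_node_N, canon_node_N]
      congr 1
      rw [hM_lemma A B c (addLeafAt (removeAt c (x :: p')) p''), heq]
      exact Multiset.cons_erase (by simp)

lemma treeList_complete : ∀ n : ℕ, 1 ≤ n → ∀ t : PreTree, canon t = t → size t = n →
    t ∈ treeList n := by
  intro n
  induction n using Nat.strong_induction_on with
  | _ n ih =>
  match n with
  | 0 => intro h; omega
  | 1 =>
    intro _ t hc hs
    rw [treeList_one, (size_eq_one_iff t).1 hs]
    simp
  | (k + 2) =>
    intro _ t hc hs
    have hne : t ≠ leaf := fun h => by rw [h] at hs; exact absurd hs (by simp [show size leaf = 1 from rfl])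
    rcases List.exists_mem_of_ne_nil _ (termPositions_ne_nil t) with ⟨q, hq⟩
    have hmem := canon_mem_aMS_removeAt t q hq hne
    have hsz : size (removeAt t q) + 1 = k + 2 := by rw [size_removeAt t q hq hne, hs]
    have hcu : canon (canon (removeAt t q)) = canon (removeAt t q) := canon_idem _
    have hszu : size (canon (removeAt t q)) = k + 1 := by rw [size_canon]; omega
    have hu : canon (removeAt t q) ∈ treeList (k + 1) :=
      ih (k + 1) (by omega) (by omega) _ hcu hszu
    rw [treeList_succ2, List.mem_dedup]
    rw [← aMS_canon] at hmem
    rcases List.mem_map.1 (Multiset.mem_coe.1 hmem) with ⟨p, hp, heq⟩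
    exact List.mem_flatMap.2 ⟨canon (removeAt t q), hu, List.mem_map.2 ⟨p, hp, by rw [heq, hc]⟩⟩

end PreTree
namespace PreTree

lemma count_coe_map (l : List (List ℕ)) (f : List ℕ → PreTree) (t' : PreTree) :
    Multiset.count t' (↑(l.map f) : Multiset PreTree) = (l.filter (fun a => f a = t')).length := by
  rw [Multiset.coe_count, List.count, List.countP_map, List.countP_eq_length_filter]
  congr 1

lemma fiber_sum (l : List (List ℕ)) (f : List ℕ → PreTree) (F : Finset PreTree)
    (hf : ∀ a ∈ l, f a ∈ F) (g : PreTree → ℕ) :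
    ∑ s ∈ F, ((l.filter (fun a => f a = s)).length * g s) = (l.map (fun a => g (f a))).sum := by
  induction l with
  | nil => simp
  | cons a l ih =>
    have hstep : ∀ s : PreTree, ((a :: l).filter (fun x => f x = s)).length * g s
        = (if f a = s then g s else 0) + (l.filter (fun x => f x = s)).length * g s := by
      intro s
      rw [List.filter_cons]
      by_cases h : f a = s
      · rw [if_pos h, if_pos (by simpa using h)]
        simp [Nat.add_mul]
        omega
      · rw [if_neg h, if_neg (by simpa using h)]
        omega
    rw [Finset.sum_congr rfl (fun s _ => hstep s), Finset.sum_add_distrib]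
    rw [ih (fun x hx => hf x (List.mem_cons_of_mem a hx))]
    rw [Finset.sum_ite_eq F (f a) g, if_pos (hf a List.mem_cons_self)]
    rfl

lemma ncoef_count (s t' : PreTree) : ncoef s t' = Multiset.count t' (aMS s) := by
  rw [ncoef, aMS, count_coe_map]

lemma mcoef_count (s t : PreTree) : mcoef s t = Multiset.count s (rMS t) := by
  rw [mcoef, rMS, count_coe_map]

lemma mem_trees {n : ℕ} {t : PreTree} : t ∈ trees n ↔ t ∈ treeList n := by
  rw [trees, List.mem_toFinset]

lemma count_bind_list (t' : PreTree) (l : List (List ℕ)) (f : List ℕ → PreTree)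
    (G : PreTree → Multiset PreTree) :
    Multiset.count t' (((↑(l.map f) : Multiset PreTree)).bind G)
      = (l.map (fun a => Multiset.count t' (G (f a)))).sum := by
  rw [Multiset.count_bind, Multiset.map_coe, Multiset.sum_coe, List.map_map]
  rfl

end PreTree

open PreTree in
theorem pruning_growth_commutation' (n : ℕ) (hn : 1 ≤ n) (t t' : PreTree)
    (ht : t ∈ trees n) (ht' : t' ∈ trees n) :
    ((∑ s ∈ trees (n + 1), ncoef t s * mcoef t' s : ℕ) : ℤ)
        - ((∑ s ∈ trees (n - 1), mcoef s t * ncoef s t' : ℕ) : ℤ)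
      = if t' = t then (n : ℤ) else 0 := by
  classical
  rcases mem_treeList n t (mem_trees.1 ht) with ⟨hct, hst⟩
  -- the PG sum
  have hPG : (∑ s ∈ trees (n + 1), ncoef t s * mcoef t' s)
      = Multiset.count t' ((aMS t).bind rMS) := by
    have hf : ∀ p ∈ positions t, canon (addLeafAt t p) ∈ trees (n + 1) :=
      fun p hp => mem_trees.2 (mem_treeList_add hn (mem_trees.1 ht) hp)
    have h1 := fiber_sum (positions t) (fun p => canon (addLeafAt t p)) (trees (n + 1)) hf
      (fun s => mcoef t' s)
    have h2 : (∑ s ∈ trees (n + 1), ncoef t s * mcoef t' s)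
        = ∑ s ∈ trees (n + 1),
            (((positions t).filter (fun p => canon (addLeafAt t p) = s)).length * mcoef t' s) :=
      rfl
    rw [h2, h1, aMS, count_bind_list]
    congr 1
    apply List.map_congr_left
    intro p _
    rw [mcoef_count]
  -- the GP sum
  have hGP : (∑ s ∈ trees (n - 1), mcoef s t * ncoef s t')
      = Multiset.count t' ((rS t).bind aMS) := by
    by_cases hn2 : 2 ≤ n
    · have htne : t ≠ leaf := by
        intro h
        rw [h, show size leaf = 1 from rfl] at hst
        omega
      have hf : ∀ q ∈ termPositions t, canon (removeAt t q) ∈ trees (n - 1) := by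
        intro q hq
        apply mem_trees.2
        apply treeList_complete (n - 1) (by omega)
        · exact canon_idem _
        · rw [size_canon]
          have := size_removeAt t q hq htne
          omega
      have h1 := fiber_sum (termPositions t) (fun q => canon (removeAt t q)) (trees (n - 1)) hf
        (fun s => ncoef s t')
      have h2 : (∑ s ∈ trees (n - 1), mcoef s t * ncoef s t')
          = ∑ s ∈ trees (n - 1),
              (((termPositions t).filter (fun q => canon (removeAt t q) = s)).length * ncoef s t') :=
        rfl
      rw [h2, h1, rS_of_ne_leaf htne, rMS, count_bind_list]
      congr 1
      apply List.map_congr_left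
      intro q _
      rw [ncoef_count]
    · -- n = 1
      have hn1 : n = 1 := by omega
      have ht0 : trees (n - 1) = (∅ : Finset PreTree) := by
        rw [hn1]
        rfl
      have htleaf : t = leaf := by
        apply (size_eq_one_iff t).1
        omega
      rw [ht0, htleaf, rS_leaf, Multiset.zero_bind]
      simp
  rw [hPG, hGP]
  have hD := congrArg (Multiset.count t') (Dmain t)
  rw [Multiset.count_add, Multiset.count_nsmul, Multiset.count_singleton, hct, hst] at hD
  rw [hD]
  push_cast
  by_cases h : t' = t
  · rw [if_pos h, if_pos h]
    ring
  · rw [if_neg h, if_neg h]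
    ring

open PreTree in
/-- The commutation relation `P G - G P = n·I` on `ℂ𝒯_n` for
every `n ≥ 1`: for all `t, t' ∈ 𝒯_n`, the coefficient of `t'` in
`P(G(t)) - G(P(t))` is `n` if `t' = t` and `0` otherwise. -/
theorem pruning_growth_commutation (n : ℕ) (hn : 1 ≤ n) (t t' : PreTree)
    (ht : t ∈ trees n) (ht' : t' ∈ trees n) :
    ((∑ s ∈ trees (n + 1), ncoef t s * mcoef t' s : ℕ) : ℤ)
        - ((∑ s ∈ trees (n - 1), mcoef s t * ncoef s t' : ℕ) : ℤ)
      = if t' = t then (n : ℤ) else 0 :=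
  pruning_growth_commutation' n hn t t' ht ht'

end RootedTreeChain
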